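/- arXiv:0908.2771 — 3 statements merged into one kernel-verified Lean document; each statement's English description precedes it below -/
import Mathlib

section
/- Let V be a real vector space of dimension n ≥ 3 equipped with a Lorentzian inner product η (signature (-,+,...,+)), and let K be a symmetric bilinear form on V such that K(U,U) = 0 for every null vector U (i.e. every U with η(U,U)=0). Then K is proportional to η: there exists a real number λ with K = λ·η. -/
/-- The Minkowski inner-product values in an orthonormal-type basis indexed by `Fin n`:
`-1` on the first (timelike) direction, `+1` on the others, `0` off-diagonal. -/
noncomputable def minkowskiEntry (n : ℕ) (i j : Fin n) : ℝ :=
  if i = j then (if (i : ℕ) = 0 then -1 else 1) else 0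

/-- A symmetric bilinear form vanishing on the null cone of a Lorentzian inner product
(dimension `n ≥ 3`) is proportional to it. -/
theorem symm_bilin_vanishing_on_null_cone_proportional
    {V : Type*} [AddCommGroup V] [Module ℝ V] [FiniteDimensional ℝ V]
    {n : ℕ} (hn : 3 ≤ n) (hdim : Module.finrank ℝ V = n)
    (η K : LinearMap.BilinForm ℝ V)
    (hηsymm : η.IsSymm) (hKsymm : K.IsSymm)
    (hLorentz : ∃ b : Module.Basis (Fin n) ℝ V, ∀ i j, η (b i) (b j) = minkowskiEntry n i j)
    (hnull : ∀ U : V, η U U = 0 → K U U = 0) :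
    ∃ lam : ℝ, K = lam • η := by
  obtain ⟨b, hb⟩ := hLorentz
  have hn0 : (0:ℕ) < n := by omega
  set z : Fin n := ⟨0, hn0⟩ with hz
  have hηzz : η (b z) (b z) = -1 := by simp [hb, minkowskiEntry, hz]
  have hηij : ∀ i j : Fin n, i ≠ j → η (b i) (b j) = 0 := by
    intro i j hij; simp [hb, minkowskiEntry, hij]
  have hηii : ∀ i : Fin n, i ≠ z → η (b i) (b i) = 1 := by
    intro i hi
    have : (i:ℕ) ≠ 0 := fun h => hi (Fin.ext h)
    simp [hb, minkowskiEntry, this]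
  have hKsymm' : ∀ x y : V, K x y = K y x := by
    intro x y; have := hKsymm.eq x y; simpa using this
  -- Step 1: for i ≠ z, K(bz, bi) = 0 and K(bi,bi) = -K(bz,bz)
  have hstep1 : ∀ i : Fin n, i ≠ z →
      K (b z) (b i) = 0 ∧ K (b i) (b i) = - K (b z) (b z) := by
    intro i hi
    have hp : K (b z + b i) (b z + b i) = 0 := by
      apply hnull
      simp only [map_add, LinearMap.add_apply]
      rw [hηzz, hηij z i (Ne.symm hi), hηij i z hi, hηii i hi]; ring
    have hm : K (b z - b i) (b z - b i) = 0 := by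
      apply hnull
      simp only [map_sub, LinearMap.sub_apply]
      rw [hηzz, hηij z i (Ne.symm hi), hηij i z hi, hηii i hi]; ring
    simp only [map_add, map_sub, LinearMap.add_apply, LinearMap.sub_apply] at hp hm
    rw [hKsymm' (b i) (b z)] at hp hm
    constructor <;> linarith
  -- Step 2: for i ≠ j both ≠ z, K(bi,bj) = 0
  have hstep2 : ∀ i j : Fin n, i ≠ z → j ≠ z → i ≠ j → K (b i) (b j) = 0 := by
    intro i j hi hj hij
    have hs2 : Real.sqrt 2 * Real.sqrt 2 = 2 := by
      exact Real.mul_self_sqrt (by norm_num)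
    have hp : K (Real.sqrt 2 • b z + b i + b j) (Real.sqrt 2 • b z + b i + b j) = 0 := by
      apply hnull
      simp only [map_add, map_smul, LinearMap.add_apply, LinearMap.smul_apply, smul_eq_mul]
      rw [hηzz, hηij z i (Ne.symm hi), hηij z j (Ne.symm hj), hηij i z hi, hηij j z hj,
        hηij i j hij, hηij j i (Ne.symm hij), hηii i hi, hηii j hj]
      nlinarith [hs2]
    simp only [map_add, map_smul, LinearMap.add_apply, LinearMap.smul_apply,
      smul_eq_mul] at hp
    rw [hKsymm' (b i) (b z), hKsymm' (b j) (b z), hKsymm' (b j) (b i),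
      (hstep1 i hi).1, (hstep1 i hi).2, (hstep1 j hj).1, (hstep1 j hj).2] at hp
    have h2 : Real.sqrt 2 * (Real.sqrt 2 * (K (b z)) (b z) + 0 + 0)
        = 2 * (K (b z)) (b z) := by rw [add_zero, add_zero, ← mul_assoc, hs2]
    rw [h2] at hp
    linarith
  refine ⟨- K (b z) (b z), ?_⟩
  refine b.ext fun i => b.ext fun j => ?_
  simp only [LinearMap.smul_apply, smul_eq_mul]
  by_cases hi : i = z
  · by_cases hj : j = z
    · subst hi; subst hj; rw [hηzz]; ring
    · subst hi; rw [hηij z j (Ne.symm hj), (hstep1 j hj).1]; ring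
  · by_cases hj : j = z
    · subst hj
      rw [hηij i z hi, hKsymm' (b i) (b z), (hstep1 i hi).1]; ring
    · by_cases hij : i = j
      · subst hij; rw [hηii i hi, (hstep1 i hi).2]; ring
      · rw [hηij i j hij, hstep2 i j hi hj hij]; ring
end

section
/- Let Φ be a symmetric 3×3 real matrix with trace φ, and define the 4-index array C_{ijkl} = 2(δ_{il}Φ_{jk} - δ_{ik}Φ_{jl} - δ_{jl}Φ_{ik} + δ_{jk}Φ_{il}) - φ(δ_{il}δ_{jk} - δ_{ik}δ_{jl}). Suppose there exists a nonzero vector z ∈ ℝ³ such that C_{isjk} z_s - Φ_{ij} z_k + Φ_{ik} z_j = 0 for all i,j,k. Then the eigenvalues of Φ are exactly -φ, φ, φ (with multiplicity). -/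
open Polynomial

/-- Kronecker delta on `Fin 3` as a real number. -/
noncomputable def kron (i j : Fin 3) : ℝ := if i = j then 1 else 0

/-- In five spacetime dimensions the boost-weight-zero Weyl components are
`C_{ijkl} = 2(δ_{il}Φ_{jk} - δ_{ik}Φ_{jl} - δ_{jl}Φ_{ik} + δ_{jk}Φ_{il}) - φ(δ_{il}δ_{jk} - δ_{ik}δ_{jl})`.
If a nonzero `z` satisfies `C_{isjk} z_s - Φ_{ij} z_k + Φ_{ik} z_j = 0`, then the
eigenvalues of `Φ` are exactly `-φ, φ, φ` (with multiplicity), i.e. the characteristic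
polynomial of `Φ` is `(X + φ)(X - φ)²`. -/
theorem eigenvalues_of_5d_nongeodesic_WAND
    (Φ : Matrix (Fin 3) (Fin 3) ℝ) (hΦ : Φ.IsSymm)
    (φ : ℝ) (hφ : Φ.trace = φ)
    (C : Fin 3 → Fin 3 → Fin 3 → Fin 3 → ℝ)
    (hC : ∀ i j k l, C i j k l =
      2 * (kron i l * Φ j k - kron i k * Φ j l - kron j l * Φ i k + kron j k * Φ i l)
        - φ * (kron i l * kron j k - kron i k * kron j l))
    (z : Fin 3 → ℝ) (hz : z ≠ 0)
    (hker : ∀ i j k, (∑ s, C i s j k * z s) - Φ i j * z k + Φ i k * z j = 0) :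
    Φ.charpoly = (X + Polynomial.C φ) * (X - Polynomial.C φ) ^ 2 := by
  classical
  obtain ⟨l, hl⟩ : ∃ l, z l ≠ 0 := by
    by_contra h; push_neg at h; exact hz (funext h)
  have hlc : l = 0 ∨ l = 1 ∨ l = 2 := by omega
  have hδ : (if (0:Fin 3) = l then φ else 0) * z 0 + (if (1:Fin 3) = l then φ else 0) * z 1
      + (if (2:Fin 3) = l then φ else 0) * z 2 = φ * z l := by
    rcases hlc with rfl | rfl | rfl <;> norm_num [Fin.ext_iff]
  have htr : Φ 0 0 + Φ 1 1 + Φ 2 2 = φ := by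
    rw [← hφ, Matrix.trace]; simp [Fin.sum_univ_three, Matrix.diag]
  have E : ∀ i j k : Fin 3,
      C i 0 j k * z 0 + C i 1 j k * z 1 + C i 2 j k * z 2 - Φ i j * z k + Φ i k * z j = 0 := by
    intro i j k; have h := hker i j k; rwa [Fin.sum_univ_three] at h
  have A : ∀ j : Fin 3, Φ 0 j * z 0 + Φ 1 j * z 1 + Φ 2 j * z 2 + φ * z j = 0 := by
    intro j
    have hj : j = 0 ∨ j = 1 ∨ j = 2 := by omega
    rcases hj with rfl | rfl | rfl
    · have e1 := E 1 0 1; have e2 := E 2 0 2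
      norm_num [hC, kron, Fin.ext_iff] at e1 e2
      linear_combination e1 + e2 - 3 * z 0 * htr
    · have e0 := E 0 1 0; have e2 := E 2 1 2
      norm_num [hC, kron, Fin.ext_iff] at e0 e2
      linear_combination e0 + e2 - 3 * z 1 * htr
    · have e0 := E 0 2 0; have e1 := E 1 2 1
      norm_num [hC, kron, Fin.ext_iff] at e0 e1
      linear_combination e0 + e1 - 3 * z 2 * htr
  have B : ∀ i j k : Fin 3,
      (Φ i k - (if i = k then φ else 0)) * z j = (Φ i j - (if i = j then φ else 0)) * z k := by
    intro i j k
    have hi : i = 0 ∨ i = 1 ∨ i = 2 := by omega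
    have hj : j = 0 ∨ j = 1 ∨ j = 2 := by omega
    have hk : k = 0 ∨ k = 1 ∨ k = 2 := by omega
    have e := E i j k
    have a0 := A 0; have a1 := A 1; have a2 := A 2
    rcases hi with rfl | rfl | rfl <;> rcases hj with rfl | rfl | rfl <;>
      rcases hk with rfl | rfl | rfl <;>
      norm_num [hC, kron, Fin.ext_iff] at e ⊢ <;> linarith
  set w : Fin 3 → ℝ := fun i => (Φ i l - (if i = l then φ else 0)) / z l with hw
  have key : ∀ i j : Fin 3, Φ i j = (if i = j then φ else 0) + w i * z j := by
    intro i j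
    have b := B i l j
    have hwi : w i = (Φ i l - (if i = l then φ else 0)) / z l := rfl
    rw [hwi]
    generalize (if i = j then φ else 0) = dij at b ⊢
    generalize (if i = l then φ else 0) = dil at b ⊢
    field_simp
    linear_combination b
  have hsum : w 0 * z 0 + w 1 * z 1 + w 2 * z 2 = -(2*φ) := by
    have a := A l
    rw [key 0 l, key 1 l, key 2 l] at a
    have h2 : (w 0 * z 0 + w 1 * z 1 + w 2 * z 2 + 2*φ) * z l = 0 := by
      linear_combination a - hδ
    rcases mul_eq_zero.mp h2 with h | h
    · linarith
    · exact absurd h hl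
  have p00 : Φ 0 0 = φ + w 0 * z 0 := by simpa using key 0 0
  have p01 : Φ 0 1 = w 0 * z 1 := by simpa using key 0 1
  have p02 : Φ 0 2 = w 0 * z 2 := by simpa using key 0 2
  have p10 : Φ 1 0 = w 1 * z 0 := by simpa using key 1 0
  have p11 : Φ 1 1 = φ + w 1 * z 1 := by simpa using key 1 1
  have p12 : Φ 1 2 = w 1 * z 2 := by simpa using key 1 2
  have p20 : Φ 2 0 = w 2 * z 0 := by simpa using key 2 0
  have p21 : Φ 2 1 = w 2 * z 1 := by simpa using key 2 1
  have p22 : Φ 2 2 = φ + w 2 * z 2 := by simpa using key 2 2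
  have hsumC : Polynomial.C (w 0) * Polynomial.C (z 0) + Polynomial.C (w 1) * Polynomial.C (z 1)
      + Polynomial.C (w 2) * Polynomial.C (z 2) = -(2 * Polynomial.C φ) := by
    simpa only [map_add, map_mul, map_neg, map_ofNat] using
      congrArg (Polynomial.C (R := ℝ)) hsum
  rw [show Φ.charpoly = (Matrix.charmatrix Φ).det from rfl, Matrix.det_fin_three]
  simp only [Matrix.charmatrix_apply_eq, Matrix.charmatrix_apply_ne _ _ _ (by decide : (0:Fin 3) ≠ 1),
    Matrix.charmatrix_apply_ne _ _ _ (by decide : (0:Fin 3) ≠ 2),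
    Matrix.charmatrix_apply_ne _ _ _ (by decide : (1:Fin 3) ≠ 0),
    Matrix.charmatrix_apply_ne _ _ _ (by decide : (1:Fin 3) ≠ 2),
    Matrix.charmatrix_apply_ne _ _ _ (by decide : (2:Fin 3) ≠ 0),
    Matrix.charmatrix_apply_ne _ _ _ (by decide : (2:Fin 3) ≠ 1),
    p00, p01, p02, p10, p11, p12, p20, p21, p22, map_add, map_mul]
  linear_combination (-(X - Polynomial.C φ)^2) * hsumC
end

section
/- Let Φ be an n×n real symmetric matrix, φ = tr(Φ), and C a 4-index array with Riemann symmetries, such that the kernel K = {z ∈ ℝⁿ : C_{iljk}z_l - Φ_{ij}z_k + Φ_{ik}z_j = 0 for all i,j,k} is nontrivial. Then every z ∈ K satisfies Φz = -φz; in particular K is contained in the (-φ)-eigenspace of Φ, and K is a linear subspace of ℝⁿ. -/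
open Finset in
/-- The kernel of the map `z ↦ C_{iljk}z_l - Φ_{ij}z_k + Φ_{ik}z_j`, for `C` with
Riemann symmetries and trace `C_{ikjk} = -2Φ_{ij}`, is a linear subspace contained in
the `(-tr Φ)`-eigenspace of `Φ`. -/
theorem kernel_is_subspace_of_eigenspace
    {n : ℕ} (Φ : Matrix (Fin n) (Fin n) ℝ) (hΦ : Φ.IsSymm)
    (C : Fin n → Fin n → Fin n → Fin n → ℝ)
    (hanti1 : ∀ i j k l, C i j k l = - C j i k l)
    (hanti2 : ∀ i j k l, C i j k l = - C i j l k)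
    (hpair : ∀ i j k l, C i j k l = C k l i j)
    (hbianchi : ∀ i j k l, C i j k l + C i k l j + C i l j k = 0)
    (htrace : ∀ i j, ∑ k, C i k j k = -2 * Φ i j)
    (K : Set (Fin n → ℝ))
    (hK : K = {z | ∀ i j k, (∑ l, C i l j k * z l) - Φ i j * z k + Φ i k * z j = 0})
    (hnontriv : ∃ z ∈ K, z ≠ 0) :
    (∀ z ∈ K, Φ.mulVec z = (- Φ.trace) • z) ∧
    (∃ W : Submodule ℝ (Fin n → ℝ), (W : Set (Fin n → ℝ)) = K) := by
  subst hK
  have hsym : ∀ a b, Φ a b = Φ b a := fun a b => (congrFun (congrFun hΦ a) b).symm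
  constructor
  · intro z hz
    funext k
    have key : ∑ i, ((∑ l, C i l i k * z l) - Φ i i * z k + Φ i k * z i) = 0 := by
      simp [hz _ _ k]
    have hc : ∀ l, ∑ i, C i l i k = -2 * Φ l k := by
      intro l
      have h1 : ∀ i, C i l i k = C l i k i := by
        intro i
        rw [hanti1, hanti2]; ring
      calc ∑ i, C i l i k = ∑ i, C l i k i := by simp [h1]
        _ = -2 * Φ l k := htrace l k
    have h2 : ∑ i, ∑ l, C i l i k * z l = -2 * ∑ l, Φ l k * z l := by
      rw [Finset.sum_comm]
      rw [Finset.mul_sum]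
      refine Finset.sum_congr rfl fun l _ => ?_
      rw [← Finset.sum_mul, hc l]; ring
    have hmv : (Φ.mulVec z) k = ∑ l, Φ l k * z l := by
      simp [Matrix.mulVec, dotProduct]
      exact Finset.sum_congr rfl fun l _ => by rw [hsym k l]
    have htr : Φ.trace = ∑ i, Φ i i := by
      simp [Matrix.trace, Matrix.diag]
    have key2 : (∑ i, ∑ l, C i l i k * z l) - (∑ i, Φ i i) * z k
        + ∑ i, Φ i k * z i = 0 := by
      rw [Finset.sum_mul] at *
      simpa [Finset.sum_add_distrib, Finset.sum_sub_distrib] using key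
    rw [h2] at key2
    have hik : ∑ i, Φ i k * z i = ∑ l, Φ l k * z l := rfl
    simp only [Pi.smul_apply, smul_eq_mul, hmv, htr]
    rw [hik] at key2
    linarith
  · refine ⟨{ carrier := setOf (fun z => ∀ i j k, (∑ l, C i l j k * z l) - Φ i j * z k + Φ i k * z j = 0),
              add_mem' := ?_,
              zero_mem' := ?_,
              smul_mem' := ?_ }, rfl⟩
    · intro a b ha hb i j k
      have h1 := ha i j k
      have h2 := hb i j k
      simp only [Pi.add_apply, mul_add, Finset.sum_add_distrib] at *
      linarith
    · intro i j k; simp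
    · intro c a ha i j k
      have h1 := ha i j k
      simp only [Pi.smul_apply, smul_eq_mul] at *
      have : (∑ l, C i l j k * (c * a l)) = c * ∑ l, C i l j k * a l := by
        rw [Finset.mul_sum]; exact Finset.sum_congr rfl fun l _ => by ring
      rw [this]
      linear_combination c * h1
end
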